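/- Let c be a point with c ∈ σ(Q) (the open simplex spanned by Q), where Q = P ∩ ∂B_{r_c}(c) with r_c = d_P^{(k)}(c), and suppose |P ∩ B_{r_c}(c)| = k (equivalently the index N_c − k equals 0). Then c is a strict local minimum of d_P^{(k)}: there is a neighborhood U of c such that d_P^{(k)}(x) ≥ d_P^{(k)}(c) for all x ∈ U. -/

import Mathlib

open Metric Classical
noncomputable section

/-- The `k`-th nearest neighbor distance function. -/
noncomputable def kNNdist {d : ℕ} (k : ℕ) (P : Finset (EuclideanSpace ℝ (Fin d)))
    (x : EuclideanSpace ℝ (Fin d)) : ℝ :=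
  sInf {r : ℝ | 0 ≤ r ∧ k ≤ (P.filter (fun p => dist x p ≤ r)).card}

/-- If `c` lies in the open simplex spanned by `Q = P ∩ ∂B_{r_c}(c)` (a strictly positive
convex combination of the points of `Q`) and the closed ball `B̄_{r_c}(c)` contains exactly
`k` points of `P` (index `0`), then `c` is a local minimum of `d_P^{(k)}`. -/
theorem index_zero_critical_point_is_local_min {d k : ℕ} (hk : 1 ≤ k)
    (P : Finset (EuclideanSpace ℝ (Fin d))) (hP : k ≤ P.card)
    (c : EuclideanSpace ℝ (Fin d)) (rc : ℝ) (hrc : rc = kNNdist k P c)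
    (Q : Finset (EuclideanSpace ℝ (Fin d)))
    (hQ : Q = P.filter (fun p => dist c p = rc))
    (lam : EuclideanSpace ℝ (Fin d) → ℝ)
    (hpos : ∀ q ∈ Q, 0 < lam q) (hsum : ∑ q ∈ Q, lam q = 1)
    (hcomb : ∑ q ∈ Q, lam q • q = c)
    (hNc : (P.filter (fun p => dist c p ≤ rc)).card = k) :
    ∃ U ∈ nhds c, ∀ x ∈ U, kNNdist k P c ≤ kNNdist k P x := by
  have hQne : Q.Nonempty := by
    rcases Finset.eq_empty_or_nonempty Q with h | h
    · simp [h] at hsum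
    · exact h
  have hrc0 : 0 ≤ rc := by
    obtain ⟨q0, hq0⟩ := hQne
    rw [hQ, Finset.mem_filter] at hq0
    rw [← hq0.2]; exact dist_nonneg
  have hPne : P.Nonempty := Finset.card_pos.mp (lt_of_lt_of_le hk hP)
  -- separation of outside points
  obtain ⟨ε, hε0, hε⟩ : ∃ ε > 0, ∀ p ∈ P, rc < dist c p → rc + ε ≤ dist c p := by
    set S := P.filter (fun p => rc < dist c p) with hS
    rcases Finset.eq_empty_or_nonempty S with h | h
    · refine ⟨1, one_pos, fun p hp hlt => ?_⟩
      have hm : p ∈ S := Finset.mem_filter.mpr ⟨hp, hlt⟩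
      rw [h] at hm
      exact absurd hm (Finset.notMem_empty p)
    · refine ⟨S.inf' h (fun p => dist c p - rc), ?_, ?_⟩
      · rw [gt_iff_lt, Finset.lt_inf'_iff]
        intro p hp
        have := (Finset.mem_filter.mp hp).2
        linarith
      · intro p hp hlt
        have := Finset.inf'_le (fun p => dist c p - rc)
          (Finset.mem_filter.mpr ⟨hp, hlt⟩ : p ∈ S)
        linarith
  refine ⟨ball c ε, ball_mem_nhds c hε0, fun x hx => ?_⟩
  rw [← hrc, kNNdist]
  -- find q ∈ Q with nonpositive inner product with x - c
  obtain ⟨q, hqQ, hq⟩ : ∃ q ∈ Q, (inner ℝ (x - c) (q - c) : ℝ) ≤ 0 := by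
    by_contra hcon
    push_neg at hcon
    have hz : ∑ q ∈ Q, lam q • (q - c) = 0 := by
      simp only [smul_sub, Finset.sum_sub_distrib, ← Finset.sum_smul, hsum, hcomb, one_smul,
        sub_self]
    have hsum0 : ∑ q ∈ Q, lam q * (inner ℝ (x - c) (q - c) : ℝ) = 0 := by
      have : (inner ℝ (x - c) (∑ q ∈ Q, lam q • (q - c)) : ℝ) = 0 := by
        rw [hz, inner_zero_right]
      rw [inner_sum] at this
      simpa only [real_inner_smul_right] using this
    have hpos' : 0 < ∑ q ∈ Q, lam q * (inner ℝ (x - c) (q - c) : ℝ) :=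
      Finset.sum_pos (fun q hq => mul_pos (hpos q hq) (hcon q hq)) hQne
    linarith
  have hqQ' := hqQ
  rw [hQ, Finset.mem_filter] at hqQ'
  have hqP : q ∈ P := hqQ'.1
  have hcq : dist c q = rc := hqQ'.2
  have hdq : rc ≤ dist x q := by
    have h1 : ‖(x - c) - (q - c)‖ ^ 2
        = ‖x - c‖ ^ 2 - 2 * (inner ℝ (x - c) (q - c) : ℝ) + ‖q - c‖ ^ 2 :=
      norm_sub_sq_real (x - c) (q - c)
    have h2 : x - q = (x - c) - (q - c) := by abel
    have h3 : ‖q - c‖ = rc := by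
      rw [← hcq, dist_eq_norm, norm_sub_rev]
    have h4 : dist x q = ‖(x - c) - (q - c)‖ := by rw [← h2, dist_eq_norm]
    nlinarith [norm_nonneg ((x - c) - (q - c)), sq_nonneg (‖x - c‖)]
  apply le_csInf
  · refine ⟨P.sup' hPne (fun p => dist x p), ?_, ?_⟩
    · obtain ⟨p, hp⟩ := hPne
      exact le_trans dist_nonneg (Finset.le_sup' (fun p => dist x p) hp)
    · have : P.filter (fun p => dist x p ≤ P.sup' hPne (fun p => dist x p)) = P := by
        apply Finset.filter_true_of_mem
        intro p hp
        exact Finset.le_sup' (fun p => dist x p) hp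
      rw [this]; exact hP
  · rintro b ⟨hb0, hbk⟩
    by_contra hlt
    push_neg at hlt
    have hsub : P.filter (fun p => dist x p ≤ b) ⊆ (P.filter (fun p => dist c p ≤ rc)).erase q := by
      intro p hp
      rw [Finset.mem_filter] at hp
      rw [Finset.mem_erase, Finset.mem_filter]
      refine ⟨?_, hp.1, ?_⟩
      · rintro rfl; linarith [hp.2]
      · by_contra hgt
        push_neg at hgt
        have h5 := hε p hp.1 hgt
        have h6 : dist x c < ε := mem_ball.mp hx
        have h7 := dist_triangle c x p
        rw [dist_comm c x] at h7
        have : rc < dist x p := by linarith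
        linarith [hp.2]
    have hqmem : q ∈ P.filter (fun p => dist c p ≤ rc) :=
      Finset.mem_filter.mpr ⟨hqP, le_of_eq hcq⟩
    have hcard := Finset.card_le_card hsub
    rw [Finset.card_erase_of_mem hqmem, hNc] at hcard
    omega
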